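/- Let a ≥ 2 be an integer, let 𝒳 ⊆ {1,…,a}^ℤ be a closed shift-invariant subset with the left shift σ, and let μ be a σ-invariant probability measure on 𝒳 which is ψ-mixing with nonincreasing rates (ψ_Δ). For each m ≥ 1 let 𝒰_m ⊆ 𝒳 be measurable with respect to the coordinates {0,…,m−1}, with 𝒰_{m+1} ⊆ 𝒰_m (shrinking sequence), and write ε_m = μ(𝒰_m). Fix n ≥ 1 with minimal return time η_n of 𝒰_n satisfying η_n < n, and let q > n be an integer. Then | ∫ 1_{𝒰_n} · ∏_{i=n}^{q} 1_{𝒰_n^c}∘σ^i dμ − ∫ 1_{𝒰_n} · ∏_{i=η_n}^{q} 1_{𝒰_n^c}∘σ^i dμ | ≤ n·ε_n·ε_{⌊η_n/2⌋}·(1 + ψ_{⌊η_n/2⌋}). -/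

import Mathlib

open MeasureTheory Filter Set ENNReal

noncomputable section

/-- The full shift space on an alphabet with `a` symbols (modeling `{1,…,a}` by `Fin a`). -/
abbrev FullShift (a : ℕ) := ℤ → Fin a

/-- The left shift `(σ x)_k = x_{k+1}`. -/
def shift {a : ℕ} (x : FullShift a) : FullShift a := fun k => x (k + 1)

/-- Entry time to `U`: `τ_U(x) = inf {k ≥ 1 : σ^k x ∈ U}` (`∞` if the orbit never enters `U`). -/
def entryTime {a : ℕ} (U : Set (FullShift a)) (x : FullShift a) : ℕ∞ :=
  ⨅ k ∈ {k : ℕ | 1 ≤ k ∧ shift^[k] x ∈ U}, (k : ℕ∞)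

/-- Minimal return time `η = inf {τ_U(x) : x ∈ U}` (as a natural number; `0` if there is no return). -/
def minReturn {a : ℕ} (U : Set (FullShift a)) : ℕ :=
  sInf {k : ℕ | 1 ≤ k ∧ ∃ x ∈ U, shift^[k] x ∈ U}

/-- The sub-σ-algebra of the product σ-algebra generated by the coordinates in `s ⊆ ℤ`. -/
def coordMS {a : ℕ} (s : Set ℤ) : MeasurableSpace (FullShift a) :=
  MeasurableSpace.comap (fun (x : FullShift a) (i : s) => x (i : ℤ)) inferInstance

/-- `μ` is ψ-mixing with rates `ψ`: `ψ Δ → 0` and for every set `U` measurable w.r.t. the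
coordinates `{0,…,n−1}` and every `V` measurable w.r.t. the nonnegative coordinates,
`|μ(U ∩ σ^{-(Δ+n)}V) − μ(U)μ(V)| ≤ ψ_Δ μ(U) μ(V)`. -/
def PsiMixing {a : ℕ} (μ : Measure (FullShift a)) (ψ : ℕ → ℝ) : Prop :=
  Tendsto ψ atTop (nhds 0) ∧
    ∀ (n Δ : ℕ) (U V : Set (FullShift a)),
      MeasurableSet[coordMS (Ico (0 : ℤ) (n : ℤ))] U →
      MeasurableSet[coordMS {i : ℤ | 0 ≤ i}] V →
      |(μ (U ∩ shift^[Δ + n] ⁻¹' V)).toReal - (μ U).toReal * (μ V).toReal| ≤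
        ψ Δ * (μ U).toReal * (μ V).toReal

lemma coordMS_le {a : ℕ} (s : Set ℤ) : coordMS (a := a) s ≤ MeasurableSpace.pi := by
  rintro t ⟨t', ht', rfl⟩
  exact (measurable_pi_lambda _ fun i => measurable_pi_apply _) ht'

lemma coordMS_mono {a : ℕ} {s t : Set ℤ} (hst : s ⊆ t) :
    coordMS (a := a) s ≤ coordMS t := by
  rintro w ⟨w', hw', rfl⟩
  refine ⟨(fun (y : t → Fin a) (i : s) => y ⟨(i : ℤ), hst i.2⟩) ⁻¹' w',
    (measurable_pi_lambda _ fun i => measurable_pi_apply _) hw', rfl⟩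

lemma indicator_prod_eq {a : ℕ} (A : Set (FullShift a)) (s : Finset ℕ) (x : FullShift a) :
    A.indicator (fun _ => (1 : ℝ)) x *
        ∏ i ∈ s, (Aᶜ).indicator (fun _ => (1 : ℝ)) (shift^[i] x) =
      (A ∩ ⋂ i ∈ s, shift^[i] ⁻¹' Aᶜ).indicator (fun _ => (1 : ℝ)) x := by
  classical
  by_cases hx : x ∈ A ∩ ⋂ i ∈ s, shift^[i] ⁻¹' Aᶜ
  · rw [Set.indicator_of_mem hx, Set.indicator_of_mem hx.1,
      Finset.prod_eq_one, one_mul]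
    intro i hi
    exact Set.indicator_of_mem (by simpa using Set.mem_iInter₂.1 hx.2 i hi) _
  · rw [Set.indicator_of_notMem hx]
    rcases Classical.em (x ∈ A) with hA | hA
    · have : ∃ i ∈ s, shift^[i] x ∉ Aᶜ := by
        by_contra h
        push_neg at h
        exact hx ⟨hA, Set.mem_iInter₂.2 fun i hi => h i hi⟩
      obtain ⟨i, hi, hAi⟩ := this
      rw [Finset.prod_eq_zero hi (Set.indicator_of_notMem hAi _), mul_zero]
    · rw [Set.indicator_of_notMem hA, zero_mul]

/-- Lemma 4.6 of the paper (the case `η_n < n`), used in the proof of the First Corollary. -/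
theorem short_return_bound
    (a : ℕ) (ha : 2 ≤ a)
    (𝒳 : Set (FullShift a)) (h𝒳closed : IsClosed 𝒳) (h𝒳inv : shift ⁻¹' 𝒳 = 𝒳)
    (μ : Measure (FullShift a)) [IsProbabilityMeasure μ] (hμ𝒳 : μ 𝒳 = 1)
    (hinv : MeasurePreserving (shift (a := a)) μ μ)
    (ψ : ℕ → ℝ) (hmix : PsiMixing μ ψ) (hanti : Antitone ψ)
    (U : ℕ → Set (FullShift a))
    (hUmeas : ∀ m : ℕ, 1 ≤ m → MeasurableSet[coordMS (Ico (0 : ℤ) (m : ℤ))] (U m))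
    (hshrink : ∀ m : ℕ, U (m + 1) ⊆ U m)
    (n : ℕ) (hn : 1 ≤ n) (hη : minReturn (U n) < n)
    (q : ℕ) (hq : n < q) :
    |(∫ x, (U n).indicator (fun _ => (1 : ℝ)) x *
          ∏ i ∈ Finset.Icc n q, ((U n)ᶜ).indicator (fun _ => (1 : ℝ)) (shift^[i] x) ∂μ) -
        (∫ x, (U n).indicator (fun _ => (1 : ℝ)) x *
          ∏ i ∈ Finset.Icc (minReturn (U n)) q,
            ((U n)ᶜ).indicator (fun _ => (1 : ℝ)) (shift^[i] x) ∂μ)| ≤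
      (n : ℝ) * (μ (U n)).toReal * (μ (U (minReturn (U n) / 2))).toReal *
        (1 + ψ (minReturn (U n) / 2)) := by
  classical
  set η := minReturn (U n) with hηdef
  set A := U n with hA
  have hψ0 : ∀ Δ, 0 ≤ ψ Δ := fun Δ =>
    le_of_tendsto hmix.1 (eventually_atTop.2 ⟨Δ, fun k hk => hanti hk⟩)
  have hUanti : Antitone U := antitone_nat_of_succ_le hshrink
  have hmeasU : ∀ m, 1 ≤ m → MeasurableSet (U m) := fun m hm => coordMS_le _ _ (hUmeas m hm)
  have hAmeas : MeasurableSet A := hmeasU n hn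
  have hshiftm : Measurable (shift (a := a)) := hinv.measurable
  have hiter : ∀ i : ℕ, Measurable (shift (a := a))^[i] := fun i => hshiftm.iterate i
  set S1 := A ∩ ⋂ i ∈ Finset.Icc n q, shift^[i] ⁻¹' Aᶜ with hS1
  set S2 := A ∩ ⋂ i ∈ Finset.Icc η q, shift^[i] ⁻¹' Aᶜ with hS2
  have hS1m : MeasurableSet S1 :=
    hAmeas.inter (Finset.measurableSet_biInter _ fun i _ => (hiter i) hAmeas.compl)
  have hS2m : MeasurableSet S2 :=
    hAmeas.inter (Finset.measurableSet_biInter _ fun i _ => (hiter i) hAmeas.compl)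
  have hI1 : (∫ x, A.indicator (fun _ => (1 : ℝ)) x *
      ∏ i ∈ Finset.Icc n q, (Aᶜ).indicator (fun _ => (1 : ℝ)) (shift^[i] x) ∂μ)
      = (μ S1).toReal := by
    simp_rw [indicator_prod_eq]
    exact integral_indicator_one hS1m
  have hI2 : (∫ x, A.indicator (fun _ => (1 : ℝ)) x *
      ∏ i ∈ Finset.Icc η q, (Aᶜ).indicator (fun _ => (1 : ℝ)) (shift^[i] x) ∂μ)
      = (μ S2).toReal := by
    simp_rw [indicator_prod_eq]
    exact integral_indicator_one hS2m
  rw [hI1, hI2]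
  have hsub : S2 ⊆ S1 := fun x hx =>
    ⟨hx.1, Set.mem_iInter₂.2 fun i hi =>
      Set.mem_iInter₂.1 hx.2 i (Finset.Icc_subset_Icc_left (le_of_lt hη) hi)⟩
  have habs : |(μ S1).toReal - (μ S2).toReal| = (μ S1).toReal - (μ S2).toReal :=
    abs_of_nonneg (sub_nonneg.2 (ENNReal.toReal_mono (measure_ne_top _ _) (measure_mono hsub)))
  rw [habs]
  rcases Nat.eq_zero_or_pos η with hη0 | hη1
  · -- no return at all: μ A = 0 by Poincaré recurrence
    have hA0 : μ A = 0 := by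
      by_contra h0
      obtain ⟨x, hx, m, hm, hxm⟩ :=
        (hinv.conservative).exists_mem_iterate_mem hAmeas.nullMeasurableSet h0
      have hmem : m ∈ {k : ℕ | 1 ≤ k ∧ ∃ x ∈ A, shift^[k] x ∈ A} :=
        ⟨Nat.one_le_iff_ne_zero.2 hm, x, hx, hxm⟩
      have : 1 ≤ η := (Nat.sInf_mem (⟨m, hmem⟩ : Set.Nonempty _)).1
      omega
    have h1 : μ S1 = 0 := measure_mono_null Set.inter_subset_left hA0
    have h2 : μ S2 = 0 := measure_mono_null Set.inter_subset_left hA0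
    rw [h1, h2]
    simp only [ENNReal.toReal_zero, sub_zero]
    have := hψ0 (η / 2)
    positivity
  · -- main case: 1 ≤ η < n
    set m := max (η / 2) 1 with hmdef
    have hm1 : 1 ≤ m := le_max_right _ _
    have hmη : m ≤ η := max_le (Nat.div_le_self _ _) hη1
    have hmn : m ≤ n := hmη.trans hη.le
    -- the difference is at most the measure of S1 \ S2
    have step1 : (μ S1).toReal - (μ S2).toReal ≤ (μ (S1 \ S2)).toReal := by
      have hle : μ S1 ≤ μ S2 + μ (S1 \ S2) := by
        have h := measure_union_le (μ := μ) S2 (S1 \ S2)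
        rwa [Set.union_diff_cancel hsub] at h
      have := ENNReal.toReal_mono
        (by exact ENNReal.add_ne_top.2 ⟨measure_ne_top _ _, measure_ne_top _ _⟩) hle
      rw [ENNReal.toReal_add (measure_ne_top _ _) (measure_ne_top _ _)] at this
      linarith
    -- S1 \ S2 is covered by early returns
    have hcover : S1 \ S2 ⊆ ⋃ i ∈ Finset.Icc η (n - 1), (A ∩ shift^[i] ⁻¹' A) := by
      rintro x ⟨hx1, hx2⟩
      have hxA : x ∈ A := hx1.1
      have hex : ∃ i ∈ Finset.Icc η q, shift^[i] x ∈ A := by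
        by_contra h
        push_neg at h
        exact hx2 ⟨hxA, Set.mem_iInter₂.2 fun i hi => h i hi⟩
      obtain ⟨i, hi, hiA⟩ := hex
      obtain ⟨hiη, hiq⟩ := Finset.mem_Icc.1 hi
      have hin : i < n := by
        by_contra hge
        push_neg at hge
        exact (Set.mem_iInter₂.1 hx1.2 i (Finset.mem_Icc.2 ⟨hge, hiq⟩)) hiA
      exact Set.mem_biUnion (Finset.mem_Icc.2 ⟨hiη, by omega⟩) ⟨hxA, hiA⟩
    -- per-term bound via ψ-mixing
    have key : ∀ i ∈ Finset.Icc η (n - 1), (μ (A ∩ shift^[i] ⁻¹' A)).toReal ≤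
        (μ A).toReal * (μ (U (η / 2))).toReal * (1 + ψ (η / 2)) := by
      intro i hi
      obtain ⟨hiη, hin⟩ := Finset.mem_Icc.1 hi
      have him : m ≤ i := hmη.trans hiη
      have hΔη2 : η / 2 ≤ i - m := by
        rcases max_choice (η / 2) 1 with hc | hc <;> omega
      have hiΔ : (i - m) + m = i := by omega
      have hsub2 : A ∩ shift^[i] ⁻¹' A ⊆ U m ∩ shift^[(i - m) + m] ⁻¹' A := by
        rw [hiΔ]
        exact Set.inter_subset_inter_left _ (hUanti hmn)
      have hVmeas : MeasurableSet[coordMS {i : ℤ | 0 ≤ i}] A :=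
        coordMS_mono (fun j hj => hj.1) _ (hUmeas n hn)
      have hmix' := hmix.2 m (i - m) (U m) A (hUmeas m hm1) hVmeas
      have hX : (μ (A ∩ shift^[i] ⁻¹' A)).toReal ≤
          (μ (U m ∩ shift^[(i - m) + m] ⁻¹' A)).toReal :=
        ENNReal.toReal_mono (measure_ne_top _ _) (measure_mono hsub2)
      have habs' := (abs_le.1 hmix').2
      have hεm : (μ (U m)).toReal ≤ (μ (U (η / 2))).toReal :=
        ENNReal.toReal_mono (measure_ne_top _ _) (measure_mono (hUanti (le_max_left _ _)))
      have hψΔ : ψ (i - m) ≤ ψ (η / 2) := hanti hΔη2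
      have h0m : (0 : ℝ) ≤ (μ (U m)).toReal := ENNReal.toReal_nonneg
      have h0n : (0 : ℝ) ≤ (μ A).toReal := ENNReal.toReal_nonneg
      have h0η : (0 : ℝ) ≤ (μ (U (η / 2))).toReal := ENNReal.toReal_nonneg
      have hψΔ0 := hψ0 (i - m)
      have hψη0 := hψ0 (η / 2)
      calc (μ (A ∩ shift^[i] ⁻¹' A)).toReal
          ≤ (μ (U m ∩ shift^[(i - m) + m] ⁻¹' A)).toReal := hX
        _ ≤ (μ (U m)).toReal * (μ A).toReal +
              ψ (i - m) * ((μ (U m)).toReal * (μ A).toReal) := by nlinarith [habs']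
        _ ≤ (μ (U (η / 2))).toReal * (μ A).toReal +
              ψ (η / 2) * ((μ (U (η / 2))).toReal * (μ A).toReal) := by
            gcongr
        _ = (μ A).toReal * (μ (U (η / 2))).toReal * (1 + ψ (η / 2)) := by ring
    -- put everything together
    have hcard : ((Finset.Icc η (n - 1)).card : ℝ) ≤ (n : ℝ) := by
      rw [Nat.card_Icc]
      exact_mod_cast Nat.le_of_lt_succ (by omega)
    have hbound0 : (0 : ℝ) ≤ (μ A).toReal * (μ (U (η / 2))).toReal * (1 + ψ (η / 2)) := by
      have := hψ0 (η / 2)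
      positivity
    calc (μ S1).toReal - (μ S2).toReal
        ≤ (μ (S1 \ S2)).toReal := step1
      _ ≤ (μ (⋃ i ∈ Finset.Icc η (n - 1), (A ∩ shift^[i] ⁻¹' A))).toReal :=
          ENNReal.toReal_mono (measure_ne_top _ _) (measure_mono hcover)
      _ ≤ (∑ i ∈ Finset.Icc η (n - 1), μ (A ∩ shift^[i] ⁻¹' A)).toReal :=
          ENNReal.toReal_mono (by
            exact (ENNReal.sum_lt_top.2 fun i _ => (measure_lt_top μ _)).ne)
            (measure_biUnion_finset_le _ _)
      _ = ∑ i ∈ Finset.Icc η (n - 1), (μ (A ∩ shift^[i] ⁻¹' A)).toReal :=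
          ENNReal.toReal_sum fun i _ => measure_ne_top _ _
      _ ≤ ∑ _i ∈ Finset.Icc η (n - 1),
            (μ A).toReal * (μ (U (η / 2))).toReal * (1 + ψ (η / 2)) :=
          Finset.sum_le_sum key
      _ = ((Finset.Icc η (n - 1)).card : ℝ) *
            ((μ A).toReal * (μ (U (η / 2))).toReal * (1 + ψ (η / 2))) := by
          rw [Finset.sum_const, nsmul_eq_mul]
      _ ≤ (n : ℝ) * ((μ A).toReal * (μ (U (η / 2))).toReal * (1 + ψ (η / 2))) :=
          mul_le_mul_of_nonneg_right hcard hbound0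
      _ = (n : ℝ) * (μ A).toReal * (μ (U (η / 2))).toReal * (1 + ψ (η / 2)) := by ring
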